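/- arXiv:2410.18867 — 6 statements merged into one kernel-verified Lean document; each statement's English description precedes it below -/
import Mathlib

section
/- If q₁,…,qₙ are polynomials over a field of characteristic zero with pairwise distinct degrees d₁,…,dₙ, then the Wronskian W(q₁,…,qₙ) is a polynomial of degree exactly d₁+⋯+dₙ − C(n,2). -/
open Polynomial

/-- The Wronskian of polynomials `p 0, …, p (n-1)`: the determinant of the matrix whose
`(i,j)` entry is the `i`-th derivative of `p j`. -/
noncomputable def polyWronskian {K : Type*} [CommRing K] {n : ℕ} (p : Fin n → K[X]) : K[X] :=
  Matrix.det (Matrix.of fun i j : Fin n => (fun q : K[X] => Polynomial.derivative q)^[(i : ℕ)] (p j))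

/-- The sum of `s.card` distinct naturals is at least `0 + 1 + ⋯ + (card - 1)`. -/
lemma aux_sum_range_card_le (s : Finset ℕ) : ∑ i ∈ Finset.range s.card, i ≤ ∑ x ∈ s, x := by
  induction s using Finset.strongInduction with
  | _ s ih =>
    rcases s.eq_empty_or_nonempty with rfl | hs
    · simp
    · have hm := s.max'_mem hs
      have hpos : 1 ≤ s.card := Finset.card_pos.mpr hs
      have h1 : s.card = (s.erase (s.max' hs)).card + 1 := by
        rw [Finset.card_erase_of_mem hm]; omega
      have hsub : s ⊆ Finset.range (s.max' hs + 1) := fun x hx =>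
        Finset.mem_range.mpr (Nat.lt_succ_of_le (Finset.le_max' s x hx))
      have hcard : s.card ≤ s.max' hs + 1 := by
        simpa using Finset.card_le_card hsub
      calc ∑ i ∈ Finset.range s.card, i
          = (∑ i ∈ Finset.range (s.erase (s.max' hs)).card, i) + (s.erase (s.max' hs)).card := by
            rw [h1, Finset.sum_range_succ]
        _ ≤ (∑ x ∈ s.erase (s.max' hs), x) + s.max' hs := by
            refine add_le_add (ih _ (Finset.erase_ssubset hm)) ?_
            omega
        _ = ∑ x ∈ s, x := Finset.sum_erase_add s _ hm

lemma aux_sum_id_le {n : ℕ} (d : Fin n → ℕ) (hd : Function.Injective d) :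
    (∑ i : Fin n, (i : ℕ)) ≤ ∑ i, d i := by
  have h := aux_sum_range_card_le (Finset.univ.image d)
  rw [Finset.card_image_of_injective _ hd, Finset.card_univ, Fintype.card_fin,
    Finset.sum_image (fun a _ b _ hab => hd hab)] at h
  calc (∑ i : Fin n, (i : ℕ)) = ∑ i ∈ Finset.range n, i :=
        (Fin.sum_univ_eq_sum_range (fun i => i) n)
    _ ≤ ∑ i, d i := h

theorem wronskian_degree_of_distinct_degrees
    {K : Type*} [Field K] [CharZero K] {n : ℕ} (q : Fin n → K[X]) (d : Fin n → ℕ)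
    (hq : ∀ i, q i ≠ 0) (hdeg : ∀ i, (q i).natDegree = d i) (hd : Function.Injective d) :
    polyWronskian q ≠ 0 ∧
      ((polyWronskian q).natDegree : ℤ) = ∑ i, (d i : ℤ) - n.choose 2 := by
  classical
  set c : Fin n → K := fun j => (q j).leadingCoeff with hc
  have hc0 : ∀ j, c j ≠ 0 := fun j => leadingCoeff_ne_zero.mpr (hq j)
  set C : ℕ := ∑ i : Fin n, (i : ℕ) with hC
  set D : ℕ := ∑ i, d i with hD
  have hCD : C ≤ D := aux_sum_id_le d hd
  set N : ℕ := D - C with hN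
  -- the per-permutation term
  set T : Equiv.Perm (Fin n) → K[X] :=
    fun σ => ∏ i, (fun p : K[X] => derivative p)^[((σ i : Fin n) : ℕ)] (q i) with hT
  have key : ∀ σ : Equiv.Perm (Fin n),
      (T σ).natDegree ≤ N ∧
      (T σ).coeff N = ∏ i, (((d i).descFactorial (σ i) : K) * c i) := by
    intro σ
    by_cases hσ : ∀ i, ((σ i : Fin n) : ℕ) ≤ d i
    · have hco : ∀ i : Fin n, (derivative^[((σ i : Fin n) : ℕ)] (q i)).coeff (d i - σ i)
          = ((d i).descFactorial (σ i) : K) * c i := by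
        intro i
        rw [coeff_iterate_derivative, Nat.sub_add_cancel (hσ i)]
        have hcd : (q i).coeff (d i) = c i := by rw [← hdeg i]; exact coeff_natDegree
        rw [hcd, nsmul_eq_mul]
      have hne : ∀ i : Fin n, ((d i).descFactorial (σ i) : K) * c i ≠ 0 := by
        intro i
        refine mul_ne_zero ?_ (hc0 i)
        rw [Nat.cast_ne_zero, Ne, Nat.descFactorial_eq_zero_iff_lt]
        exact Nat.not_lt.mpr (hσ i)
      have hf0 : ∀ i : Fin n, derivative^[((σ i : Fin n) : ℕ)] (q i) ≠ 0 := by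
        intro i h
        exact hne i (by rw [← hco i, h, coeff_zero])
      have hndf : ∀ i : Fin n, (derivative^[((σ i : Fin n) : ℕ)] (q i)).natDegree
          = d i - σ i := by
        intro i
        refine le_antisymm ?_ (le_natDegree_of_ne_zero (by rw [hco i]; exact hne i))
        simpa [hdeg i] using natDegree_iterate_derivative (q i) (σ i)
      have hlcf : ∀ i : Fin n, (derivative^[((σ i : Fin n) : ℕ)] (q i)).leadingCoeff
          = ((d i).descFactorial (σ i) : K) * c i := by
        intro i
        rw [leadingCoeff, hndf i, hco i]
      have hσsum : (∑ i : Fin n, ((σ i : Fin n) : ℕ)) = C := Equiv.sum_comp σ (fun i => (i : ℕ))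
      have hsum : (∑ i : Fin n, (d i - ((σ i : Fin n) : ℕ))) = N := by
        have h1 : (∑ i : Fin n, (d i - ((σ i : Fin n) : ℕ))) + C = D := by
          rw [← hσsum, ← Finset.sum_add_distrib]
          exact Finset.sum_congr rfl fun i _ => Nat.sub_add_cancel (hσ i)
        omega
      have hndT : (T σ).natDegree = N := by
        rw [hT]
        rw [natDegree_prod _ _ (fun i _ => hf0 i), ← hsum]
        exact Finset.sum_congr rfl fun i _ => hndf i
      constructor
      · exact le_of_eq hndT
      · rw [← hndT, coeff_natDegree, hT, leadingCoeff_prod]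
        exact Finset.prod_congr rfl fun i _ => hlcf i
    · push_neg at hσ
      obtain ⟨i0, hi0⟩ := hσ
      have hz : derivative^[((σ i0 : Fin n) : ℕ)] (q i0) = 0 :=
        iterate_derivative_eq_zero (by rw [hdeg]; exact hi0)
      have hT0 : T σ = 0 := Finset.prod_eq_zero (Finset.mem_univ i0) hz
      refine ⟨by simp [hT0], ?_⟩
      rw [hT0, coeff_zero]
      refine (Finset.prod_eq_zero (Finset.mem_univ i0) ?_).symm
      rw [Nat.descFactorial_eq_zero_iff_lt.mpr hi0]
      simp
  have hdet : polyWronskian q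
      = ∑ σ : Equiv.Perm (Fin n), ((Equiv.Perm.sign σ : ℤ) : K[X]) * T σ := by
    rw [polyWronskian, Matrix.det_apply']
    rfl
  have hdegW : (polyWronskian q).natDegree ≤ N := by
    rw [hdet]
    refine natDegree_sum_le_of_forall_le _ _ fun σ _ => natDegree_mul_le.trans ?_
    rw [natDegree_intCast]
    simpa using (key σ).1
  have hcoeffW : (polyWronskian q).coeff N
      = (∏ j, c j) * (Matrix.vandermonde fun i => (d i : K)).det := by
    have hstep : (polyWronskian q).coeff N = (Matrix.of fun i j : Fin n =>
        (((d j).descFactorial i : K) * c j)).det := by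
      rw [hdet, finset_sum_coeff, Matrix.det_apply']
      refine Finset.sum_congr rfl fun σ _ => ?_
      rw [← zsmul_eq_mul, coeff_smul, (key σ).2, zsmul_eq_mul]
      rfl
    rw [hstep]
    have hmul : (Matrix.of fun i j : Fin n => (((d j).descFactorial i : K) * c j)).det
        = (∏ j, c j) * (Matrix.of fun i j : Fin n => ((d j).descFactorial i : K)).det := by
      rw [show (Matrix.of fun i j : Fin n => (((d j).descFactorial i : K) * c j))
          = Matrix.of fun i j : Fin n =>
            c j * (Matrix.of fun i j : Fin n => ((d j).descFactorial i : K)) i j by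
        ext i j; simp [mul_comm]]
      exact Matrix.det_mul_row c _
    rw [hmul]
    congr 1
    rw [← Matrix.det_transpose (Matrix.of fun i j : Fin n => ((d j).descFactorial i : K))]
    have htr : Matrix.transpose (Matrix.of fun i j : Fin n => ((d j).descFactorial i : K))
        = Matrix.of fun i j : Fin n => ((descPochhammer K (j : ℕ)).eval ((d i : ℕ) : K)) := by
      ext i j
      rw [Matrix.transpose_apply, Matrix.of_apply, Matrix.of_apply,
        descPochhammer_eval_eq_descFactorial]
    rw [htr]
    exact (Matrix.det_eval_matrixOfPolynomials_eq_det_vandermonde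
      (fun i => (d i : K)) (fun i => descPochhammer K (i : ℕ))
      (fun i => descPochhammer_natDegree K (i : ℕ))
      (fun i => monic_descPochhammer K (i : ℕ))).symm
  have hvand : (Matrix.vandermonde fun i => (d i : K)).det ≠ 0 := by
    rw [Matrix.det_vandermonde_ne_zero_iff]
    exact fun a b hab => hd (Nat.cast_injective hab)
  have hcne : (polyWronskian q).coeff N ≠ 0 := by
    rw [hcoeffW]
    exact mul_ne_zero (Finset.prod_ne_zero_iff.mpr fun j _ => hc0 j) hvand
  have hW0 : polyWronskian q ≠ 0 := fun h => hcne (by rw [h, coeff_zero])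
  have hndW : (polyWronskian q).natDegree = N :=
    le_antisymm hdegW (le_natDegree_of_ne_zero hcne)
  refine ⟨hW0, ?_⟩
  have hC2 : C = n.choose 2 := by
    rw [hC, Fin.sum_univ_eq_sum_range (fun i => i) n, Finset.sum_range_id,
      Nat.choose_two_right]
  have hDsum : (D : ℤ) = ∑ i, (d i : ℤ) := by
    rw [hD]; push_cast; ring
  rw [hndW, ← hDsum, ← hC2]
  omega
end

section
/- If q₁,…,qₙ are polynomials over a field of characteristic zero with strictly decreasing degrees d₁ > d₂ > … > dₙ, and the Wronskian W(q₁,…,qₙ) is a nonzero constant, then dᵢ = n − i for each i = 1,…,n. -/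
open Polynomial

private lemma iterDeriv_facts {K : Type*} [Field K] [CharZero K]
    (p : K[X]) (hp : p ≠ 0) {k : ℕ} (hk : k ≤ p.natDegree) :
    (derivative^[k] p).natDegree = p.natDegree - k ∧
    (derivative^[k] p).leadingCoeff = (p.natDegree.descFactorial k : K) * p.leadingCoeff := by
  have hco : (derivative^[k] p).coeff (p.natDegree - k)
      = (p.natDegree.descFactorial k : K) * p.leadingCoeff := by
    rw [coeff_iterate_derivative, Nat.sub_add_cancel hk, nsmul_eq_mul]
    rfl
  have hne : ((p.natDegree.descFactorial k : K) * p.leadingCoeff) ≠ 0 := by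
    apply mul_ne_zero
    · rw [Nat.cast_ne_zero]
      intro h
      exact absurd (Nat.descFactorial_eq_zero_iff_lt.mp h) (not_lt.mpr hk)
    · exact leadingCoeff_ne_zero.mpr hp
  have hdeg : (derivative^[k] p).natDegree = p.natDegree - k :=
    le_antisymm (natDegree_iterate_derivative p k)
      (le_natDegree_of_ne_zero (by rw [hco]; exact hne))
  exact ⟨hdeg, by rw [leadingCoeff, hdeg, hco]⟩

theorem degrees_of_nonzero_const_wronskian
    {K : Type*} [Field K] [CharZero K] {n : ℕ} (q : Fin n → K[X]) (d : Fin n → ℕ)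
    (hq : ∀ i, q i ≠ 0) (hdeg : ∀ i, (q i).natDegree = d i)
    (hanti : ∀ i j : Fin n, i < j → d j < d i)
    (c : K) (hc : c ≠ 0) (hW : polyWronskian q = C c) :
    ∀ i : Fin n, d i = n - 1 - (i : ℕ) := by
  classical
  -- lower bound on degrees
  have hge : ∀ i : Fin n, n - 1 - (i : ℕ) ≤ d i := by
    have key : ∀ k : ℕ, ∀ i : Fin n, (i : ℕ) + k ≤ n - 1 → k ≤ d i := by
      intro k
      induction k with
      | zero => intro i _; exact Nat.zero_le _
      | succ k ih =>
        intro i hi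
        have hin := i.isLt
        have hlt : (i : ℕ) + 1 < n := by omega
        have h1 : k ≤ d ⟨(i : ℕ) + 1, hlt⟩ := ih _ (by simp; omega)
        have h2 : d ⟨(i : ℕ) + 1, hlt⟩ < d i := hanti i _ (by simp [Fin.lt_def])
        omega
    intro i
    have hin := i.isLt
    exact key (n - 1 - (i : ℕ)) i (by omega)
  set T : ℕ := ∑ i : Fin n, (i : ℕ) with hT
  have hTsum : ∑ i : Fin n, (n - 1 - (i : ℕ)) = T := by
    rw [hT]
    refine Fintype.sum_bijective Fin.rev Fin.rev_bijective _ _ fun i => ?_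
    rw [Fin.val_rev]
    omega
  have hTle : T ≤ ∑ i : Fin n, d i := by
    rw [← hTsum]
    exact Finset.sum_le_sum fun i _ => hge i
  set N : ℕ := (∑ i : Fin n, d i) - T with hNdef
  have hN : T + N = ∑ i : Fin n, d i := by omega
  have hσsum : ∀ σ : Equiv.Perm (Fin n), ∑ i, ((σ i : ℕ)) = T :=
    fun σ => Equiv.sum_comp σ (fun i : Fin n => (i : ℕ))
  -- coefficient of each permutation product
  have key : ∀ σ : Equiv.Perm (Fin n),
      (∏ i, derivative^[(σ i : ℕ)] (q i)).coeff N
        = (∏ i, (q i).leadingCoeff) * ∏ i, (((d i).descFactorial (σ i) : ℕ) : K) := by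
    intro σ
    by_cases hσ : ∀ i, (σ i : ℕ) ≤ d i
    · have facts := fun i => iterDeriv_facts (q i) (hq i)
        (k := (σ i : ℕ)) (by rw [hdeg]; exact hσ i)
      have h1 : ∀ i, derivative^[(σ i : ℕ)] (q i) ≠ 0 := by
        intro i
        rw [← leadingCoeff_ne_zero, (facts i).2]
        exact mul_ne_zero
          (by rw [Nat.cast_ne_zero]
              intro h
              exact absurd (Nat.descFactorial_eq_zero_iff_lt.mp h)
                (not_lt.mpr ((hdeg i) ▸ hσ i)))
          (leadingCoeff_ne_zero.mpr (hq i))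
      have hnd : (∏ i, derivative^[(σ i : ℕ)] (q i)).natDegree = N := by
        rw [natDegree_prod _ _ fun i _ => h1 i]
        have he : ∑ i, (derivative^[(σ i : ℕ)] (q i)).natDegree
            = ∑ i, (d i - (σ i : ℕ)) :=
          Finset.sum_congr rfl fun i _ => by rw [(facts i).1, hdeg]
        have h2 : ∑ i, (d i - (σ i : ℕ)) + ∑ i, ((σ i : ℕ)) = ∑ i, d i := by
          rw [← Finset.sum_add_distrib]
          exact Finset.sum_congr rfl fun i _ => Nat.sub_add_cancel (hσ i)
        have h3 := hσsum σ
        omega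
      rw [← hnd, coeff_natDegree, leadingCoeff_prod, ← Finset.prod_mul_distrib]
      refine Finset.prod_congr rfl fun i _ => ?_
      rw [(facts i).2, hdeg, mul_comm]
    · push_neg at hσ
      obtain ⟨i0, hi0⟩ := hσ
      have hz : derivative^[(σ i0 : ℕ)] (q i0) = 0 :=
        iterate_derivative_eq_zero (by rw [hdeg]; exact hi0)
      have hz2 : (∏ i, (((d i).descFactorial (σ i) : ℕ) : K)) = 0 :=
        Finset.prod_eq_zero (Finset.mem_univ i0)
          (by rw [Nat.descFactorial_eq_zero_iff_lt.mpr hi0, Nat.cast_zero])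
      rw [Finset.prod_eq_zero (Finset.mem_univ i0) hz, coeff_zero, hz2, mul_zero]
  -- the coefficient of the Wronskian at N
  have hWc : (polyWronskian q).coeff N
      = (∏ i, (q i).leadingCoeff)
        * (Matrix.of fun i j : Fin n => (((d j).descFactorial (i : ℕ) : ℕ) : K)).det := by
    rw [polyWronskian, Matrix.det_apply', finset_sum_coeff, Matrix.det_apply', Finset.mul_sum]
    refine Finset.sum_congr rfl fun σ _ => ?_
    have hterm : (((Equiv.Perm.sign σ : ℤ) : K[X])
        * ∏ i, (Matrix.of fun i j : Fin n =>
            (fun r : K[X] => derivative r)^[(i : ℕ)] (q j)) (σ i) i).coeff N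
        = ((Equiv.Perm.sign σ : ℤ) : K)
          * (∏ i, derivative^[(σ i : ℕ)] (q i)).coeff N := by
      rw [show (((Equiv.Perm.sign σ : ℤ) : K[X])) = C (((Equiv.Perm.sign σ : ℤ) : K)) by
        simp, coeff_C_mul]
      rfl
    rw [hterm, key σ]
    simp only [Matrix.of_apply]
    ring
  have hdetne : (Matrix.of fun i j : Fin n => (((d j).descFactorial (i : ℕ) : ℕ) : K)).det ≠ 0 := by
    have h1 : (Matrix.of fun i j : Fin n => (((d j).descFactorial (i : ℕ) : ℕ) : K))
        = Matrix.transpose (Matrix.of fun i j : Fin n =>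
            (descPochhammer K (j : ℕ)).eval ((d i : ℕ) : K)) := by
      ext i j
      simp [Matrix.transpose_apply, descPochhammer_eval_eq_descFactorial]
    rw [h1, Matrix.det_transpose,
      ← Matrix.det_eval_matrixOfPolynomials_eq_det_vandermonde
        (fun i : Fin n => ((d i : ℕ) : K)) (fun i : Fin n => descPochhammer K (i : ℕ))
        (fun i => descPochhammer_natDegree K _) (fun i => monic_descPochhammer _ _)]
    apply Matrix.det_vandermonde_ne_zero_iff.mpr
    intro i j hij
    have hdij : d i = d j := Nat.cast_injective hij
    rcases lt_trichotomy i j with h1 | h1 | h1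
    · exact absurd hdij (hanti i j h1).ne'
    · exact h1
    · exact absurd hdij (hanti j i h1).ne
  have hprodne : (∏ i, (q i).leadingCoeff) ≠ 0 :=
    Finset.prod_ne_zero_iff.mpr fun i _ => leadingCoeff_ne_zero.mpr (hq i)
  have hcoeffne : (polyWronskian q).coeff N ≠ 0 := by
    rw [hWc]; exact mul_ne_zero hprodne hdetne
  have hN0 : N = 0 := by
    by_contra hN0
    rw [hW, coeff_C, if_neg hN0] at hcoeffne
    exact hcoeffne rfl
  -- sums are equal, so pointwise equal
  have hsum_eq : ∑ i : Fin n, d i = ∑ i : Fin n, (n - 1 - (i : ℕ)) := by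
    rw [hTsum]; omega
  intro i
  by_contra hne
  have hlt : n - 1 - (i : ℕ) < d i := lt_of_le_of_ne (hge i) (Ne.symm hne)
  have : ∑ j : Fin n, (n - 1 - (j : ℕ)) < ∑ j : Fin n, d j :=
    Finset.sum_lt_sum (fun j _ => hge j) ⟨i, Finset.mem_univ i, hlt⟩
  omega
end

section
/- Let p₁,…,pₙ be linearly independent polynomials over a field of characteristic zero. The Wronskian W(p₁,…,pₙ) is a nonzero constant if and only if there exists a nonsingular n×n matrix A with pᵢ(t) = Σ_{j=1}^{n} Aᵢⱼ t^{j−1} for all i (equivalently, each pᵢ has degree at most n−1). -/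
open Polynomial

section Aux

variable {K : Type*} [Field K] {n : ℕ}

lemma iterate_derivative_sum_comb (m : ℕ) (f : Fin n → K[X]) (c : Fin n → K) :
    (fun r : K[X] => derivative r)^[m] (∑ k, C (c k) * f k)
      = ∑ k, C (c k) * (fun r : K[X] => derivative r)^[m] (f k) := by
  induction m generalizing f with
  | zero => simp
  | succ m ih =>
    rw [Function.iterate_succ_apply]
    have h1 : derivative (∑ k, C (c k) * f k) = ∑ k, C (c k) * derivative (f k) := by
      simp [derivative_C_mul]
    rw [h1, ih]
    simp only [Function.iterate_succ_apply]

lemma polyWronskian_comb (B : Matrix (Fin n) (Fin n) K) (p q : Fin n → K[X])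
    (h : ∀ i, q i = ∑ j, C (B i j) * p j) :
    polyWronskian q = C B.det * polyWronskian p := by
  unfold polyWronskian
  have key : (Matrix.of fun i j : Fin n => (fun r : K[X] => derivative r)^[(i : ℕ)] (q j))
      = (Matrix.of fun i j : Fin n => (fun r : K[X] => derivative r)^[(i : ℕ)] (p j))
        * Matrix.transpose (B.map C) := by
    refine Matrix.ext fun i j => ?_
    simp only [Matrix.mul_apply, Matrix.of_apply, Matrix.transpose_apply, Matrix.map_apply]
    rw [h j, iterate_derivative_sum_comb]
    exact Finset.sum_congr rfl fun k _ => mul_comm (C (B j k)) _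
  rw [key, Matrix.det_mul, Matrix.det_transpose, ← RingHom.mapMatrix_apply, ← RingHom.map_det, mul_comm]

lemma polyWronskian_pow [CharZero K] :
    polyWronskian (fun j : Fin n => (X : K[X]) ^ (j : ℕ)) = C (∏ i : Fin n, (Nat.factorial (i : ℕ) : K)) := by
  unfold polyWronskian
  rw [Matrix.det_of_upperTriangular]
  · rw [map_prod]
    refine Finset.prod_congr rfl fun i _ => ?_
    simp only [Matrix.of_apply, iterate_derivative_X_pow_eq_C_mul, Nat.sub_self, pow_zero,
      mul_one, Nat.descFactorial_self]
  · intro i j hij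
    simp only [Matrix.of_apply, iterate_derivative_X_pow_eq_C_mul]
    rw [Nat.descFactorial_eq_zero_iff_lt.mpr (by exact_mod_cast hij)]
    simp

lemma coeff_prod_of_natDegree_le' {ι : Type*} (s : Finset ι) (f : ι → K[X]) (e : ι → ℕ)
    (h : ∀ i ∈ s, (f i).natDegree ≤ e i) :
    (∏ i ∈ s, f i).coeff (∑ i ∈ s, e i) = ∏ i ∈ s, (f i).coeff (e i) := by
  classical
  induction s using Finset.cons_induction with
  | empty => simp
  | cons a s ha ih =>
    rw [Finset.prod_cons, Finset.sum_cons, Finset.prod_cons,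
      coeff_mul_add_eq_of_natDegree_le (h a (Finset.mem_cons_self a s))
        ((natDegree_prod_le s f).trans (Finset.sum_le_sum fun i hi => h i (Finset.mem_cons_of_mem hi))),
      ih fun i hi => h i (Finset.mem_cons_of_mem hi)]

lemma det_descFactorial [CharZero K] (d : Fin n → ℕ) :
    (Matrix.of fun i j : Fin n => ((d j).descFactorial (i : ℕ) : K)).det
      = ∏ i : Fin n, ∏ j ∈ Finset.Ioi i, ((d j : K) - (d i : K)) := by
  have key : (Matrix.of fun i j : Fin n => ((d j).descFactorial (i : ℕ) : K))
      = (Matrix.of fun i k : Fin n => (descPochhammer K (i : ℕ)).coeff (k : ℕ))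
        * Matrix.transpose (Matrix.vandermonde fun i : Fin n => ((d i : ℕ) : K)) := by
    refine Matrix.ext fun i j => ?_
    simp only [Matrix.mul_apply, Matrix.of_apply, Matrix.transpose_apply, Matrix.vandermonde_apply]
    rw [← descPochhammer_eval_eq_descFactorial K (d j) (i : ℕ),
      eval_eq_sum_range' (n := n) (by rw [descPochhammer_natDegree]; exact i.isLt),
      ← Fin.sum_univ_eq_sum_range]
  rw [key, Matrix.det_mul, Matrix.det_transpose, Matrix.det_vandermonde]
  have hS : (Matrix.of fun i k : Fin n => (descPochhammer K (i : ℕ)).coeff (k : ℕ)).det = 1 := by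
    rw [Matrix.det_of_lowerTriangular]
    · refine Finset.prod_eq_one fun i _ => ?_
      have hm := monic_descPochhammer K (i : ℕ)
      simpa [descPochhammer_natDegree] using hm.coeff_natDegree
    · intro i j hij
      simp only [Matrix.of_apply]
      refine coeff_eq_zero_of_natDegree_lt ?_
      rw [descPochhammer_natDegree]
      exact_mod_cast hij
  rw [hS, one_mul]

lemma linearIndependent_of_natDegree_inj {ι : Type*} (f : ι → K[X]) (h0 : ∀ i, f i ≠ 0)
    (hinj : ∀ i j, (f i).natDegree = (f j).natDegree → i = j) :
    LinearIndependent K f := by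
  classical
  rw [linearIndependent_iff']
  intro s
  induction s using Finset.strongInduction with
  | _ s ih =>
    intro g hg i hi
    obtain ⟨i₀, hi₀s, hmax⟩ := s.exists_max_image (fun i => (f i).natDegree) ⟨i, hi⟩
    have hg0 : g i₀ = 0 := by
      have hc := congrArg (fun r : K[X] => r.coeff ((f i₀).natDegree)) hg
      simp only [finset_sum_coeff, coeff_smul, coeff_zero] at hc
      rw [Finset.sum_eq_single i₀] at hc
      · have hlc : (f i₀).leadingCoeff ≠ 0 := leadingCoeff_ne_zero.mpr (h0 i₀)
        rw [smul_eq_mul] at hc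
        exact (mul_eq_zero.mp hc).resolve_right hlc
      · intro b hb hbne
        have hlt : (f b).natDegree < (f i₀).natDegree := by
          refine lt_of_le_of_ne (hmax b hb) fun he => hbne (hinj b i₀ he)
        rw [coeff_eq_zero_of_natDegree_lt hlt, smul_zero]
      · intro hns; exact absurd hi₀s hns
    rcases eq_or_ne i i₀ with rfl | hne
    · exact hg0
    · refine ih (s.erase i₀) (Finset.erase_ssubset hi₀s) g ?_ i (Finset.mem_erase.mpr ⟨hne, hi⟩)
      rw [← Finset.add_sum_erase s _ hi₀s] at hg
      rwa [hg0, zero_smul, zero_add] at hg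

lemma coeff_polyWronskian [CharZero K] (q : Fin n → K[X]) (d : Fin n → ℕ)
    (hdeg : ∀ i, (q i).natDegree = d i) (h0 : ∀ i, q i ≠ 0) (hle : ∀ i : Fin n, (i : ℕ) ≤ d i) :
    (polyWronskian q).coeff (∑ i, (d i - (i : ℕ)))
      = (∏ i, (q i).leadingCoeff)
        * (Matrix.of fun i j : Fin n => ((d j).descFactorial (i : ℕ) : K)).det := by
  classical
  unfold polyWronskian
  rw [Matrix.det_apply, Matrix.det_apply, finset_sum_coeff, Finset.mul_sum]
  refine Finset.sum_congr rfl fun σ _ => ?_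
  rw [coeff_smul, mul_smul_comm]
  congr 1
  simp only [Matrix.of_apply]
  by_cases hσ : ∀ j : Fin n, (σ j : ℕ) ≤ d j
  · have hsum : ∑ j : Fin n, (d j - (j : ℕ)) = ∑ j : Fin n, (d j - (σ j : ℕ)) := by
      have h1 : ((∑ j : Fin n, (d j - (j : ℕ)) : ℕ) : ℤ)
          = ∑ j : Fin n, ((d j : ℤ) - ((j : ℕ) : ℤ)) := by
        rw [Nat.cast_sum]
        exact Finset.sum_congr rfl fun j _ => by rw [Nat.cast_sub (hle j)]
      have h2 : ((∑ j : Fin n, (d j - (σ j : ℕ)) : ℕ) : ℤ)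
          = ∑ j : Fin n, ((d j : ℤ) - ((σ j : ℕ) : ℤ)) := by
        rw [Nat.cast_sum]
        exact Finset.sum_congr rfl fun j _ => by rw [Nat.cast_sub (hσ j)]
      have h3 : ∑ j : Fin n, (((σ j : ℕ) : ℤ)) = ∑ j : Fin n, ((j : ℕ) : ℤ) :=
        Equiv.sum_comp σ (fun i : Fin n => ((i : ℕ) : ℤ))
      have : ((∑ j : Fin n, (d j - (j : ℕ)) : ℕ) : ℤ)
          = ((∑ j : Fin n, (d j - (σ j : ℕ)) : ℕ) : ℤ) := by
        rw [h1, h2, Finset.sum_sub_distrib, Finset.sum_sub_distrib, h3]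
      exact_mod_cast this
    have hbound : ∀ j : Fin n, j ∈ Finset.univ →
        ((fun r : K[X] => derivative r)^[(σ j : ℕ)] (q j)).natDegree ≤ d j - (σ j : ℕ) := by
      intro j _
      have := natDegree_iterate_derivative (q j) (σ j : ℕ)
      rwa [hdeg j] at this
    rw [hsum, coeff_prod_of_natDegree_le' _ _ _ hbound]
    have hfac : ∀ j : Fin n,
        ((fun r : K[X] => derivative r)^[(σ j : ℕ)] (q j)).coeff (d j - (σ j : ℕ))
          = ((d j).descFactorial (σ j : ℕ) : K) * (q j).leadingCoeff := by
      intro j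
      rw [coeff_iterate_derivative, Nat.sub_add_cancel (hσ j), nsmul_eq_mul]
      congr 1
      rw [← hdeg j]
      rfl
    rw [Finset.prod_congr rfl fun j _ => hfac j, Finset.prod_mul_distrib, mul_comm]
  · push_neg at hσ
    obtain ⟨j, hj⟩ := hσ
    have hzero : (fun r : K[X] => derivative r)^[(σ j : ℕ)] (q j) = 0 := by
      refine iterate_derivative_eq_zero ?_
      rw [hdeg j]; exact hj
    rw [Finset.prod_eq_zero (Finset.mem_univ j) hzero, coeff_zero]
    refine (mul_eq_zero_of_right _ (Finset.prod_eq_zero (Finset.mem_univ j) ?_)).symm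
    rw [Nat.descFactorial_eq_zero_iff_lt.mpr hj, Nat.cast_zero]

lemma span_degree_choice (V : Submodule K K[X]) (f : ℕ → K[X])
    (hf : ∀ v : K[X], v ∈ V → v ≠ 0 →
      f v.natDegree ∈ V ∧ f v.natDegree ≠ 0 ∧ (f v.natDegree).natDegree = v.natDegree) :
    ∀ v ∈ V, v ∈ Submodule.span K
      (f '' {d : ℕ | ∃ w : K[X], w ∈ V ∧ w ≠ 0 ∧ w.natDegree = d}) := by
  suffices H : ∀ N : ℕ, ∀ v : K[X], v ∈ V → v.natDegree ≤ N → v ∈ Submodule.span K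
      (f '' {d : ℕ | ∃ w : K[X], w ∈ V ∧ w ≠ 0 ∧ w.natDegree = d}) by
    intro v hv; exact H v.natDegree v hv le_rfl
  intro N
  induction N using Nat.strong_induction_on with
  | _ N ih =>
    intro v hv hvN
    by_cases hv0 : v = 0
    · rw [hv0]; exact Submodule.zero_mem _
    · obtain ⟨hwV, hw0, hwd⟩ := hf v hv hv0
      set w := f v.natDegree with hw
      have hwmem : w ∈ f '' {d : ℕ | ∃ w : K[X], w ∈ V ∧ w ≠ 0 ∧ w.natDegree = d} :=
        ⟨v.natDegree, ⟨v, hv, hv0, rfl⟩, rfl⟩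
      have hlcv : v.leadingCoeff ≠ 0 := leadingCoeff_ne_zero.mpr hv0
      have hlcw : w.leadingCoeff ≠ 0 := leadingCoeff_ne_zero.mpr hw0
      set c : K := v.leadingCoeff / w.leadingCoeff with hc
      have hc0 : c ≠ 0 := div_ne_zero hlcv hlcw
      set u : K[X] := C c * w with hu
      have hu0 : u ≠ 0 := mul_ne_zero (by simpa using hc0) hw0
      have huV : u ∈ V := by rw [hu, ← smul_eq_C_mul]; exact V.smul_mem c hwV
      have huspan : u ∈ Submodule.span K
          (f '' {d : ℕ | ∃ w : K[X], w ∈ V ∧ w ≠ 0 ∧ w.natDegree = d}) := by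
        rw [hu, ← smul_eq_C_mul]
        exact Submodule.smul_mem _ c (Submodule.subset_span hwmem)
      have hdegu : u.degree = v.degree := by
        rw [hu, degree_mul, degree_C hc0, zero_add, degree_eq_natDegree hw0,
          degree_eq_natDegree hv0, hwd]
      have hlcu : u.leadingCoeff = v.leadingCoeff := by
        rw [hu, leadingCoeff_mul, leadingCoeff_C, hc, div_mul_cancel₀ _ hlcw]
      by_cases h0' : v - u = 0
      · rw [show v = u from sub_eq_zero.mp h0']; exact huspan
      · have hdlt : (v - u).degree < v.degree := degree_sub_lt hdegu.symm hv0 hlcu.symm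
        have hnlt : (v - u).natDegree < v.natDegree := by
          have := degree_eq_natDegree hv0 ▸ degree_eq_natDegree h0' ▸ hdlt
          exact_mod_cast this
        have hmem := ih (v - u).natDegree (lt_of_lt_of_le hnlt hvN) (v - u)
          (Submodule.sub_mem V hv huV) le_rfl
        have : v = (v - u) + u := by ring
        rw [this]
        exact Submodule.add_mem _ hmem huspan

end Aux

theorem wronskian_nonzero_const_iff_transition
    {K : Type*} [Field K] [CharZero K] {n : ℕ} (p : Fin n → K[X])
    (hind : LinearIndependent K p) :
    (∃ c : K, c ≠ 0 ∧ polyWronskian p = C c) ↔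
      (∃ A : Matrix (Fin n) (Fin n) K, IsUnit A.det ∧
        ∀ i, p i = ∑ j, C (A i j) * X ^ (j : ℕ)) := by
  constructor
  · rintro ⟨c, hc, hW⟩
    classical
    have hdeg : ∀ i, (p i).natDegree < n := by
      intro i₀
      haveI : Nonempty (Fin n) := ⟨i₀⟩
      set V : Submodule K K[X] := Submodule.span K (Set.range p) with hV
      haveI : FiniteDimensional K V := FiniteDimensional.span_of_finite K (Set.finite_range p)
      have hrank : Module.finrank K V = n := by
        rw [hV, finrank_span_eq_card hind, Fintype.card_fin]
      set S : Set ℕ := {dd : ℕ | ∃ w : K[X], w ∈ V ∧ w ≠ 0 ∧ w.natDegree = dd} with hS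
      set f : ℕ → K[X] := fun dd =>
        if h : ∃ w : K[X], w ∈ V ∧ w ≠ 0 ∧ w.natDegree = dd then h.choose else 0 with hfdef
      have hf : ∀ v : K[X], v ∈ V → v ≠ 0 →
          f v.natDegree ∈ V ∧ f v.natDegree ≠ 0 ∧ (f v.natDegree).natDegree = v.natDegree := by
        intro v hv hv0
        have hex : ∃ w : K[X], w ∈ V ∧ w ≠ 0 ∧ w.natDegree = v.natDegree := ⟨v, hv, hv0, rfl⟩
        rw [hfdef]
        simp only [dif_pos hex]
        exact hex.choose_spec
      have hfS : ∀ dd ∈ S, f dd ∈ V ∧ f dd ≠ 0 ∧ (f dd).natDegree = dd := by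
        rintro dd ⟨w, hwV, hw0, rfl⟩; exact hf w hwV hw0
      have hspan : ∀ v ∈ V, v ∈ Submodule.span K (f '' S) := span_degree_choice V f hf
      have hliS : LinearIndependent K (fun dd : S => f (dd : ℕ)) := by
        refine linearIndependent_of_natDegree_inj _ (fun dd => (hfS dd dd.2).2.1) ?_
        intro a b hab
        have ha := (hfS a a.2).2.2
        have hb := (hfS b b.2).2.2
        exact Subtype.ext (by rw [← ha, ← hb, hab])
      have hliSV : LinearIndependent K (fun dd : S => (⟨f (dd : ℕ), (hfS dd dd.2).1⟩ : V)) := by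
        refine LinearIndependent.of_comp V.subtype ?_
        convert hliS
        rfl
      have hfinS : S.Finite := Set.finite_coe_iff.mp hliSV.finite
      set T := hfinS.toFinset with hT
      have hcard : T.card = n := by
        apply le_antisymm
        · letI := hfinS.fintype
          have hle1 := hliSV.fintype_card_le_finrank
          rw [hrank] at hle1
          rwa [hT, Set.Finite.card_toFinset]
        · have himage : Submodule.span K (f '' S) = V := by
            apply le_antisymm
            · refine Submodule.span_le.mpr ?_
              rintro x ⟨dd, hdd, rfl⟩
              exact (hfS dd hdd).1
            · exact fun v hv => hspan v hv
          have hfin2 : (f '' S).Finite := hfinS.image f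
          letI := hfin2.fintype
          have hle2 := finrank_span_le_card (R := K) (f '' S)
          rw [himage, hrank] at hle2
          refine hle2.trans ?_
          have himg : hfin2.toFinset = T.image f := Set.Finite.toFinset_image f hfinS hfin2
          rw [← Set.Finite.toFinset_eq_toFinset hfin2, himg]
          exact Finset.card_image_le
      set e := T.orderIsoOfFin hcard with he
      set d : Fin n → ℕ := fun i => (e i : ℕ) with hd
      have hdmono : StrictMono d := fun a b hab => Subtype.coe_lt_coe.mpr (e.strictMono hab)
      have hdS : ∀ i, d i ∈ S := fun i => hfinS.mem_toFinset.mp (e i).2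
      set q : Fin n → K[X] := fun i => f (d i) with hq
      have hq0 : ∀ i, q i ≠ 0 := fun i => (hfS _ (hdS i)).2.1
      have hqdeg : ∀ i, (q i).natDegree = d i := fun i => (hfS _ (hdS i)).2.2
      have hqV : ∀ i, q i ∈ V := fun i => (hfS _ (hdS i)).1
      have hrange : Set.range q = f '' S := by
        ext x
        constructor
        · rintro ⟨i, rfl⟩; exact ⟨d i, hdS i, rfl⟩
        · rintro ⟨dd, hdd, rfl⟩
          have hddT : dd ∈ T := hfinS.mem_toFinset.mpr hdd
          refine ⟨e.symm ⟨dd, hddT⟩, ?_⟩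
          simp [hq, hd]
      set pV : Fin n → V := fun i => ⟨p i, Submodule.subset_span ⟨i, rfl⟩⟩ with hpV
      have hpVind : LinearIndependent K pV := LinearIndependent.of_comp V.subtype (by convert hind; rfl)
      set bP : Module.Basis (Fin n) K V := basisOfLinearIndependentOfCardEqFinrank hpVind
        (by rw [Fintype.card_fin, hrank]) with hbP
      set qV : Fin n → V := fun i => ⟨q i, hqV i⟩ with hqVdef
      set B : Matrix (Fin n) (Fin n) K := Matrix.of fun i j => bP.repr (qV i) j with hB
      have hcomb : ∀ i, q i = ∑ j, C (B i j) * p j := by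
        intro i
        have hsum := bP.sum_repr (qV i)
        have hcoe := congrArg (V.subtype) hsum
        simp only [map_sum, map_smul] at hcoe
        have hqi : (V.subtype) (qV i) = q i := rfl
        rw [← hqi, ← hcoe]
        refine Finset.sum_congr rfl fun j _ => ?_
        rw [smul_eq_C_mul]
        congr 1
        have : bP j = pV j := congrFun (coe_basisOfLinearIndependentOfCardEqFinrank hpVind _) j
        rw [this]
        rfl
      have hqind : LinearIndependent K q :=
        linearIndependent_of_natDegree_inj q hq0
          (fun a b hab => hdmono.injective (by rw [← hqdeg a, ← hqdeg b, hab]))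
      have hBunit : IsUnit B.det := by
        rw [← Matrix.isUnit_iff_isUnit_det]
        refine Matrix.linearIndependent_rows_iff_isUnit.mp ?_
        have hqVind : LinearIndependent K qV := LinearIndependent.of_comp V.subtype (by convert hqind; rfl)
        have hmap := hqVind.map' bP.equivFun.toLinearMap bP.equivFun.ker
        have hfun : (fun i => (B i : Fin n → K)) = fun i => bP.equivFun.toLinearMap (qV i) := by
          funext i
          funext j
          simp [hB, Module.Basis.equivFun_apply]
        rw [show B.row = _ from hfun]
        exact hmap
      have hWq : polyWronskian q = C (B.det * c) := by
        rw [polyWronskian_comb B p q hcomb, hW, ← C_mul]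
      have hle : ∀ i : Fin n, (i : ℕ) ≤ d i := by
        have key : ∀ k : ℕ, ∀ h : k < n, k ≤ d ⟨k, h⟩ := by
          intro k
          induction k with
          | zero => intro h; exact Nat.zero_le _
          | succ k ih =>
            intro h
            have h' : k < n := Nat.lt_of_succ_lt h
            have h1 := ih h'
            have h2 : d ⟨k, h'⟩ < d ⟨k + 1, h⟩ := hdmono (by simp [Fin.lt_def])
            omega
        intro i
        simpa using key (i : ℕ) i.isLt
      have hco := coeff_polyWronskian q d hqdeg hq0 hle
      rw [det_descFactorial, hWq] at hco
      have hne : (∏ i, (q i).leadingCoeff)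
          * ∏ i : Fin n, ∏ j ∈ Finset.Ioi i, ((d j : K) - (d i : K)) ≠ 0 := by
        refine mul_ne_zero
          (Finset.prod_ne_zero_iff.mpr fun i _ => leadingCoeff_ne_zero.mpr (hq0 i)) ?_
        refine Finset.prod_ne_zero_iff.mpr fun i _ =>
          Finset.prod_ne_zero_iff.mpr fun j hj => ?_
        have hlt : d i < d j := hdmono (Finset.mem_Ioi.mp hj)
        refine sub_ne_zero.mpr fun hcast => ?_
        exact absurd (Nat.cast_injective hcast) (Nat.ne_of_lt hlt).symm
      have hDzero : ∑ i : Fin n, (d i - (i : ℕ)) = 0 := by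
        by_contra hD
        rw [coeff_C, if_neg hD] at hco
        exact hne hco.symm
      have hdi : ∀ i : Fin n, d i = (i : ℕ) := by
        intro i
        have h1 := (Finset.sum_eq_zero_iff).mp hDzero i (Finset.mem_univ i)
        have h2 := hle i
        omega
      have hVle : V ≤ Polynomial.degreeLT K n := by
        have hsub : Submodule.span K (f '' S) ≤ Polynomial.degreeLT K n := by
          rw [← hrange]
          refine Submodule.span_le.mpr ?_
          rintro x ⟨i, rfl⟩
          rw [SetLike.mem_coe, Polynomial.mem_degreeLT]
          refine lt_of_le_of_lt (degree_le_natDegree) ?_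
          rw [hqdeg i, hdi i]
          exact_mod_cast i.isLt
        exact fun v hv => hsub (hspan v hv)
      have hpi : p i₀ ∈ Polynomial.degreeLT K n := hVle (Submodule.subset_span ⟨i₀, rfl⟩)
      rw [Polynomial.mem_degreeLT] at hpi
      exact (natDegree_lt_iff_degree_lt (hind.ne_zero i₀)).mpr hpi
    refine ⟨Matrix.of fun i j : Fin n => (p i).coeff (j : ℕ), ?_, ?_⟩
    · -- invertibility
      set Φ : K[X] →ₗ[K] (Fin n → K) := LinearMap.pi fun j : Fin n => lcoeff K (j : ℕ) with hΦ
      have hdis : Disjoint (Submodule.span K (Set.range p)) (LinearMap.ker Φ) := by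
        rw [Submodule.disjoint_def]
        intro x hxV hxK
        have hxlt : x ∈ Polynomial.degreeLT K n := by
          refine (Submodule.span_le.mpr ?_) hxV
          rintro _ ⟨i, rfl⟩
          rw [SetLike.mem_coe, Polynomial.mem_degreeLT]
          exact lt_of_le_of_lt (degree_le_natDegree) (by exact_mod_cast hdeg i)
        rw [Polynomial.mem_degreeLT] at hxlt
        rw [LinearMap.mem_ker] at hxK
        ext k
        rcases lt_or_ge k n with hk | hk
        · have := congrFun hxK ⟨k, hk⟩
          simpa [hΦ, lcoeff_apply] using this
        · simp [coeff_eq_zero_of_degree_lt (lt_of_lt_of_le hxlt (by exact_mod_cast hk))]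
      have hli : LinearIndependent K (Φ ∘ p) := hind.map hdis
      have hrows : LinearIndependent K
          (fun i => (Matrix.of fun i j : Fin n => (p i).coeff (j : ℕ)) i) := by
        convert hli using 1
        rfl
      rw [← Matrix.isUnit_iff_isUnit_det]
      exact Matrix.linearIndependent_rows_iff_isUnit.mp hrows
    · intro i
      have := as_sum_range' (p i) n (hdeg i)
      simp only [Matrix.of_apply]
      rw [Fin.sum_univ_eq_sum_range (fun j => C ((p i).coeff j) * X ^ j) n]
      rw [this]
      nth_rewrite 2 [← this]
      exact Finset.sum_congr rfl fun j _ => (C_mul_X_pow_eq_monomial).symm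
  · rintro ⟨A, hA, hp⟩
    have hcomb := polyWronskian_comb A (fun j : Fin n => (X : K[X]) ^ (j : ℕ)) p hp
    rw [hcomb, polyWronskian_pow, ← C_mul]
    refine ⟨A.det * ∏ i : Fin n, (Nat.factorial (i : ℕ) : K), ?_, rfl⟩
    refine mul_ne_zero (hA.ne_zero) (Finset.prod_ne_zero_iff.mpr fun i _ => ?_)
    exact Nat.cast_ne_zero.mpr (Nat.factorial_ne_zero _)
end

section
/- If p₁,…,pₙ are linearly independent polynomials over a field of characteristic zero and max(deg pᵢ) ≤ n−1, then W(p₁,…,pₙ) is a nonzero constant. -/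
open Polynomial

theorem wronskian_nonzero_const_of_low_degree
    {K : Type*} [Field K] [CharZero K] {n : ℕ} (p : Fin n → K[X])
    (hind : LinearIndependent K p) (hdeg : ∀ i, (p i).natDegree ≤ n - 1) :
    ∃ c : K, c ≠ 0 ∧ polyWronskian p = C c := by
  classical
  rcases Nat.eq_zero_or_pos n with hn | hn
  · subst hn
    exact ⟨1, one_ne_zero, by simp [polyWronskian, Matrix.det_fin_zero]⟩
  have hdeg' : ∀ j, (p j).natDegree < n := fun j => lt_of_le_of_lt (hdeg j) (Nat.sub_lt hn one_pos)
  set A : Matrix (Fin n) (Fin n) K := fun k j => (p j).coeff k with hA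
  set V : Matrix (Fin n) (Fin n) K[X] :=
    fun i k => (fun q : K[X] => derivative q)^[(i : ℕ)] (X ^ (k : ℕ)) with hV
  -- p j as a sum of monomials
  have hpsum : ∀ j, p j = ∑ k : Fin n, C ((p j).coeff k) * X ^ (k : ℕ) := by
    intro j
    conv_lhs => rw [(p j).as_sum_range' n (hdeg' j)]
    rw [Finset.sum_range fun k => (monomial k) ((p j).coeff k)]
    exact Finset.sum_congr rfl fun k _ => by rw [← C_mul_X_pow_eq_monomial]
  have hfac : (Matrix.of fun i j : Fin n =>
      (fun q : K[X] => derivative q)^[(i : ℕ)] (p j)) = V * A.map C := by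
    refine Matrix.ext fun i j => ?_
    simp only [Matrix.of_apply, Matrix.mul_apply, Matrix.map_apply, hV, hA]
    conv_lhs => rw [hpsum j]
    rw [iterate_derivative_sum]
    exact Finset.sum_congr rfl fun k _ => by
      rw [iterate_derivative_C_mul, mul_comm]; rfl
  -- det V
  have hVdet : V.det = C (∏ i : Fin n, ((i : ℕ).factorial : K)) := by
    have htri : V.BlockTriangular id := by
      intro i k h
      simp only [id] at h
      simp [hV, iterate_derivative_X_pow_eq_C_mul,
        Nat.descFactorial_eq_zero_iff_lt.2 h]
    rw [Matrix.det_of_upperTriangular htri, map_prod]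
    refine Finset.prod_congr rfl fun i _ => ?_
    simp [hV, iterate_derivative_X_pow_eq_C_mul, Nat.descFactorial_self]
  -- det A ≠ 0
  have hAdet : A.det ≠ 0 := by
    intro h0
    obtain ⟨v, hv, hAv⟩ := Matrix.exists_mulVec_eq_zero_iff.2 h0
    have hq : ∑ j, v j • p j = 0 := by
      ext k
      rw [Polynomial.finset_sum_coeff, Polynomial.coeff_zero]
      by_cases hk : k < n
      · have := congrFun hAv ⟨k, hk⟩
        simpa [Matrix.mulVec, dotProduct, hA, mul_comm] using this
      · refine Finset.sum_eq_zero fun j _ => ?_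
        rw [Polynomial.coeff_smul, Polynomial.coeff_eq_zero_of_natDegree_lt
          (lt_of_lt_of_le (hdeg' j) (not_lt.1 hk)), smul_zero]
    have := Fintype.linearIndependent_iff.1 hind v hq
    exact hv (funext this)
  refine ⟨(∏ i : Fin n, ((i : ℕ).factorial : K)) * A.det, ?_, ?_⟩
  · exact mul_ne_zero (Finset.prod_ne_zero_iff.2 fun i _ => Nat.cast_ne_zero.2
      (Nat.factorial_ne_zero _)) hAdet
  · have hmap : (A.map (C : K →+* K[X])).det = C A.det := by
      rw [← RingHom.mapMatrix_apply, ← RingHom.map_det]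
    rw [polyWronskian, hfac, Matrix.det_mul, hVdet, hmap, ← map_mul]
end

section
/- Let q₁,…,qₙ be Laurent polynomials over a field of characteristic zero whose maximum degrees (exponents of highest-order terms) d₁,…,dₙ are pairwise distinct. Then the Wronskian W(q₁,…,qₙ) is a Laurent polynomial whose maximum degree equals d₁+⋯+dₙ − C(n,2). -/
open LaurentPolynomial

/-- Formal derivative of a Laurent polynomial. -/
noncomputable def lderiv {K : Type*} [CommRing K] (p : K[T;T⁻¹]) : K[T;T⁻¹] :=
  Finsupp.sum (AddMonoidAlgebra.coeff p) fun k a => LaurentPolynomial.C (a * (k : K)) * LaurentPolynomial.T (k - 1)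

/-- The Wronskian of Laurent polynomials: the determinant of the matrix whose
`(i,j)` entry is the `i`-th derivative of `p j`. -/
noncomputable def lW {K : Type*} [CommRing K] {n : ℕ} (p : Fin n → K[T;T⁻¹]) : K[T;T⁻¹] :=
  Matrix.det (Matrix.of fun i j : Fin n => lderiv^[(i : ℕ)] (p j))

section Aux

variable {K : Type*} [CommRing K]


/-- degree ≤ m -/
def dLE (p : K[T;T⁻¹]) (m : ℤ) : Prop := ∀ k : ℤ, m < k → p.coeff k = 0

lemma lderiv_apply (p : K[T;T⁻¹]) (j : ℤ) : (lderiv p).coeff j = p.coeff (j+1) * ((j+1 : ℤ) : K) := by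
  classical
  unfold lderiv
  rw [AddMonoidAlgebra.coeff_finsuppSum, Finsupp.sum_apply]
  simp only [← single_eq_C_mul_T, AddMonoidAlgebra.coeff_single, Finsupp.single_apply]
  rw [Finsupp.sum]
  rw [Finset.sum_eq_single (j+1)]
  · by_cases h : j + 1 ∈ p.coeff.support
    · simp
    · rw [Finsupp.notMem_support_iff.mp h]
      simp
  · intro b _ hb
    rw [if_neg (by omega)]
  · intro h
    rw [Finsupp.notMem_support_iff.mp h]
    simp

lemma dLE_lderiv {p : K[T;T⁻¹]} {m : ℤ} (hp : dLE p m) : dLE (lderiv p) (m - 1) := by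
  intro k hk
  rw [lderiv_apply, hp (k+1) (by omega), zero_mul]

lemma dLE_mul_apply {p q : K[T;T⁻¹]} {a b : ℤ} (hp : dLE p a) (hq : dLE q b) :
    (p * q).coeff (a + b) = p.coeff a * q.coeff b := by
  classical
  rw [AddMonoidAlgebra.mul_apply]
  rw [Finsupp.sum]
  rw [Finset.sum_eq_single a]
  · rw [Finsupp.sum, Finset.sum_eq_single b]
    · simp
    · intro l hl hlb
      have : l ≤ b := by
        by_contra h
        exact (Finsupp.mem_support_iff.mp hl) (hq l (by omega))
      rw [if_neg (by omega)]
    · intro h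
      rw [Finsupp.notMem_support_iff.mp h]
      simp
  · intro k hk hka
    have hkb : k ≤ a := by
      by_contra h
      exact (Finsupp.mem_support_iff.mp hk) (hp k (by omega))
    apply Finset.sum_eq_zero
    intro l hl
    have : l ≤ b := by
      by_contra h
      exact (Finsupp.mem_support_iff.mp hl) (hq l (by omega))
    dsimp only
    rw [if_neg (by omega)]
  · intro h
    rw [Finsupp.notMem_support_iff.mp h]
    simp [Finsupp.sum]

lemma dLE_mul {p q : K[T;T⁻¹]} {a b : ℤ} (hp : dLE p a) (hq : dLE q b) :
    dLE (p * q) (a + b) := by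
  classical
  intro x hx
  rw [AddMonoidAlgebra.mul_apply, Finsupp.sum]
  apply Finset.sum_eq_zero
  intro k hk
  rw [Finsupp.sum]
  apply Finset.sum_eq_zero
  intro l hl
  have h1 : k ≤ a := by
    by_contra h
    exact (Finsupp.mem_support_iff.mp hk) (hp k (by omega))
  have h2 : l ≤ b := by
    by_contra h
    exact (Finsupp.mem_support_iff.mp hl) (hq l (by omega))
  rw [if_neg (by omega)]

lemma dLE_one : dLE (1 : K[T;T⁻¹]) 0 := by
  intro k hk
  rw [AddMonoidAlgebra.one_def, AddMonoidAlgebra.coeff_single, Finsupp.single_apply, if_neg (by omega)]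

lemma one_apply_zero : (1 : K[T;T⁻¹]).coeff 0 = 1 := by
  rw [AddMonoidAlgebra.one_def, AddMonoidAlgebra.coeff_single, Finsupp.single_apply, if_pos rfl]

lemma dLE_prod {ι : Type*} (s : Finset ι) (p : ι → K[T;T⁻¹]) (e : ι → ℤ)
    (h : ∀ i ∈ s, dLE (p i) (e i)) :
    dLE (∏ i ∈ s, p i) (∑ i ∈ s, e i) ∧
      (∏ i ∈ s, p i).coeff (∑ i ∈ s, e i) = ∏ i ∈ s, (p i).coeff (e i) := by
  classical
  induction s using Finset.cons_induction with
  | empty => exact ⟨by simpa using dLE_one, by simpa using one_apply_zero⟩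
  | cons i s his ih =>
    simp only [Finset.prod_cons, Finset.sum_cons]
    obtain ⟨ih1, ih2⟩ := ih (fun j hj => h j (Finset.mem_cons_of_mem hj))
    have hi := h i (Finset.mem_cons_self i s)
    exact ⟨dLE_mul hi ih1, by rw [dLE_mul_apply hi ih1, ih2]⟩

lemma dLE_iter {p : K[T;T⁻¹]} {m : ℤ} (hp : dLE p m) (i : ℕ) :
    dLE (lderiv^[i] p) (m - i) ∧
      (lderiv^[i] p).coeff (m - i) = p.coeff m * ∏ k ∈ Finset.range i, ((m : K) - k) := by
  induction i with
  | zero => simpa using hp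
  | succ i ih =>
    obtain ⟨ih1, ih2⟩ := ih
    rw [Function.iterate_succ_apply']
    constructor
    · have := dLE_lderiv ih1
      intro k hk
      apply this
      omega
    · have : (m - (i + 1 : ℕ) : ℤ) = (m - i) - 1 := by push_cast; omega
      rw [this, lderiv_apply]
      have h2 : (m - (i:ℤ) - 1 + 1) = m - i := by omega
      rw [h2, ih2, Finset.prod_range_succ]
      push_cast
      ring

lemma det_fall {n : ℕ} (K : Type*) [Field K] (v : Fin n → K) :
    (Matrix.of fun i j : Fin n => ∏ k ∈ Finset.range (i : ℕ), (v j - (k : K))).det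
      = ∏ i : Fin n, ∏ j ∈ Finset.Ioi i, (v j - v i) := by
  have hmonic : ∀ i : Fin n, Polynomial.Monic
      (∏ k ∈ Finset.range (i : ℕ), (Polynomial.X - Polynomial.C (k : K))) := fun i =>
    Polynomial.monic_prod_of_monic _ _ fun k _ => Polynomial.monic_X_sub_C _
  have hdeg : ∀ i : Fin n, (∏ k ∈ Finset.range (i : ℕ),
      (Polynomial.X - Polynomial.C (k : K))).natDegree = (i : ℕ) := by
    intro i
    rw [Polynomial.natDegree_prod _ _ fun k _ => Polynomial.X_sub_C_ne_zero _]
    simp only [Polynomial.natDegree_X_sub_C, Finset.sum_const, smul_eq_mul, mul_one,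
      Finset.card_range]
  have h := Matrix.det_eval_matrixOfPolynomials_eq_det_vandermonde v
    (fun i => ∏ k ∈ Finset.range (i : ℕ), (Polynomial.X - Polynomial.C (k : K))) hdeg hmonic
  rw [Matrix.det_vandermonde] at h
  rw [h, ← Matrix.det_transpose]
  congr 1
  ext i j
  simp [Matrix.transpose_apply, Polynomial.eval_prod]


end Aux

theorem wronskian_laurent_max_degree
    {K : Type*} [Field K] [CharZero K] {n : ℕ} (q : Fin n → K[T;T⁻¹]) (d : Fin n → ℤ)
    (hq : ∀ i, q i ≠ 0) (hd : ∀ i, (Finsupp.support (AddMonoidAlgebra.coeff (q i))).max = (d i : WithBot ℤ))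
    (hinj : Function.Injective d) :
    lW q ≠ 0 ∧
      (Finsupp.support (AddMonoidAlgebra.coeff (lW q))).max = ((∑ i, d i - n.choose 2 : ℤ) : WithBot ℤ) := by
  classical
  set c : Fin n → K := fun i => (q i).coeff (d i) with hc_def
  have hdle : ∀ i, dLE (q i) (d i) := by
    intro i k hk
    by_contra h
    have hk' := Finset.le_max (Finsupp.mem_support_iff.mpr h)
    rw [hd i] at hk'
    exact absurd (WithBot.coe_le_coe.mp hk') (by omega)
  have hc : ∀ i, c i ≠ 0 := fun i => Finsupp.mem_support_iff.mp (Finset.mem_of_max (hd i))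
  set N : ℤ := ∑ i, d i - n.choose 2 with hN
  have hchoose : ((n.choose 2 : ℕ) : ℤ) = ∑ i : Fin n, ((i : ℕ) : ℤ) := by
    have h2 : (∑ i ∈ Finset.range n, i) * 2 = n * (n - 1) := Finset.sum_range_id_mul_two n
    have h3 : n.choose 2 = n * (n - 1) / 2 := Nat.choose_two_right n
    have h4 : n.choose 2 = ∑ i ∈ Finset.range n, i := by omega
    rw [h4]
    rw [← Fin.sum_univ_eq_sum_range (fun i => i) n]
    push_cast
    rfl
  have hNσ : ∀ σ : Equiv.Perm (Fin n), ∑ i : Fin n, (d i - ((σ i : ℕ) : ℤ)) = N := by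
    intro σ
    rw [Finset.sum_sub_distrib, hN, hchoose]
    congr 1
    exact Equiv.sum_comp σ (fun i => ((i : ℕ) : ℤ))
  have key : ∀ σ : Equiv.Perm (Fin n),
      dLE (∏ i, lderiv^[((σ i : ℕ))] (q i)) N ∧
      (∏ i, lderiv^[((σ i : ℕ))] (q i)).coeff N
        = ∏ i, (c i * ∏ k ∈ Finset.range ((σ i : ℕ)), ((d i : K) - k)) := by
    intro σ
    have h := dLE_prod Finset.univ (fun i => lderiv^[(σ i : ℕ)] (q i))
      (fun i => d i - (σ i : ℕ)) (fun i _ => (dLE_iter (hdle i) _).1)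
    rw [hNσ σ] at h
    refine ⟨h.1, h.2.trans ?_⟩
    exact Finset.prod_congr rfl fun i _ => (dLE_iter (hdle i) ((σ i : ℕ))).2
  have hW : lW q = ∑ σ : Equiv.Perm (Fin n),
      ((Equiv.Perm.sign σ : ℤ) : K[T;T⁻¹]) * ∏ i, lderiv^[((σ i : ℕ))] (q i) := by
    rw [lW, Matrix.det_apply']
    rfl
  have happ : ∀ x : ℤ, (lW q).coeff x = ∑ σ : Equiv.Perm (Fin n),
      ((Equiv.Perm.sign σ : ℤ) : K) * (∏ i, lderiv^[((σ i : ℕ))] (q i)).coeff x := by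
    intro x
    rw [hW, AddMonoidAlgebra.coeff_sum, Finsupp.finset_sum_apply]
    refine Finset.sum_congr rfl fun σ _ => ?_
    rw [← zsmul_eq_mul, AddMonoidAlgebra.coeff_smul_apply, zsmul_eq_mul]
  -- degree bound
  have hWle : dLE (lW q) N := by
    intro x hx
    rw [happ x]
    apply Finset.sum_eq_zero
    intro σ _
    rw [(key σ).1 x hx, mul_zero]
  -- value of the top coefficient
  have hV := det_fall K (fun i => ((d i : ℤ) : K))
  have htop : (lW q).coeff N = (∏ i, c i) *
      ∏ i : Fin n, ∏ j ∈ Finset.Ioi i, (((d j : ℤ) : K) - ((d i : ℤ) : K)) := by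
    rw [happ N]
    have : ∀ σ : Equiv.Perm (Fin n),
        ((Equiv.Perm.sign σ : ℤ) : K) * (∏ i, lderiv^[((σ i : ℕ))] (q i)).coeff N
        = (∏ i, c i) * (((Equiv.Perm.sign σ : ℤ) : K)
            * ∏ i, (Matrix.of fun a b : Fin n =>
                ∏ k ∈ Finset.range ((a : ℕ)), (((d b : ℤ) : K) - k)) (σ i) i) := by
      intro σ
      rw [(key σ).2, Finset.prod_mul_distrib]
      simp only [Matrix.of_apply]
      ring
    rw [Finset.sum_congr rfl fun σ _ => this σ, ← Finset.mul_sum, ← Matrix.det_apply', hV]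
  have hVne : (∏ i : Fin n, ∏ j ∈ Finset.Ioi i, (((d j : ℤ) : K) - ((d i : ℤ) : K))) ≠ 0 := by
    apply Finset.prod_ne_zero_iff.mpr
    intro i _
    apply Finset.prod_ne_zero_iff.mpr
    intro j hj
    have : d j ≠ d i := fun h => (Finset.mem_Ioi.mp hj).ne' (hinj h)
    intro h0
    exact this (by exact_mod_cast sub_eq_zero.mp h0)
  have hNne : (lW q).coeff N ≠ 0 := by
    rw [htop]
    exact mul_ne_zero (Finset.prod_ne_zero_iff.mpr fun i _ => hc i) hVne
  have hmem : N ∈ (lW q).coeff.support := Finsupp.mem_support_iff.mpr hNne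
  refine ⟨fun h0 => hNne (by rw [h0]; rfl), ?_⟩
  refine le_antisymm (Finset.max_le fun k hk => ?_) (Finset.le_max hmem)
  by_contra h
  have : N < k := by
    have := WithBot.coe_le_coe.not.mp h
    omega
  exact (Finsupp.mem_support_iff.mp hk) (hWle k this)
end

section
/- If r₁,…,rₙ ∈ ℤ are pairwise distinct with r₁+⋯+rₙ = C(n,2), A is an invertible n×n matrix over K, and pᵢ(t) = Σⱼ Aᵢⱼ t^{rⱼ}, then the Wronskian W(p₁,…,pₙ) is a nonzero constant. -/
open LaurentPolynomial

section Aux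

variable {K : Type*} [CommRing K]

lemma lderiv_C_mul_T (a : K) (m : ℤ) :
    lderiv (LaurentPolynomial.C a * T m) = LaurentPolynomial.C (a * (m : K)) * T (m - 1) := by
  rw [← single_eq_C_mul_T]
  unfold lderiv
  rw [AddMonoidAlgebra.coeff_single, Finsupp.sum_single_index]
  simp

lemma lderiv_add (p q : K[T;T⁻¹]) : lderiv (p + q) = lderiv p + lderiv q := by
  unfold lderiv
  rw [AddMonoidAlgebra.coeff_add]
  refine Finsupp.sum_add_index' (fun k => by simp) (fun k a b => ?_)
  rw [add_mul, map_add, add_mul]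

/-- `lderiv` as an additive monoid hom. -/
noncomputable def lderivHom : K[T;T⁻¹] →+ K[T;T⁻¹] :=
  AddMonoidHom.mk' lderiv lderiv_add

lemma lderiv_sum {ι : Type*} (s : Finset ι) (f : ι → K[T;T⁻¹]) :
    lderiv (∑ x ∈ s, f x) = ∑ x ∈ s, lderiv (f x) :=
  map_sum (lderivHom (K := K)) f s

lemma lderiv_iter_sum {ι : Type*} (i : ℕ) (s : Finset ι) (f : ι → K[T;T⁻¹]) :
    lderiv^[i] (∑ x ∈ s, f x) = ∑ x ∈ s, lderiv^[i] (f x) := by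
  induction i with
  | zero => simp
  | succ i ih =>
      simp only [Function.iterate_succ_apply', ih, lderiv_sum]

lemma lderiv_iter_single (a : K) (m : ℤ) (i : ℕ) :
    lderiv^[i] (LaurentPolynomial.C a * T m) =
      LaurentPolynomial.C (a * ∏ l ∈ Finset.range i, ((m : K) - l)) * T (m - i) := by
  induction i generalizing a m with
  | zero => simp
  | succ i ih =>
      rw [Function.iterate_succ_apply, lderiv_C_mul_T, ih]
      congr 1
      · congr 1
        rw [Finset.prod_range_succ']
        have h : ∀ l ∈ Finset.range i, ((m - 1 : ℤ) : K) - (l : K)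
            = (m : K) - ((l + 1 : ℕ) : K) := by
          intro l _
          push_cast
          ring
        rw [Finset.prod_congr rfl h]
        push_cast
        ring
      · congr 1
        push_cast
        ring

lemma T_prod {ι : Type*} (s : Finset ι) (f : ι → ℤ) :
    (∏ x ∈ s, (T (f x) : K[T;T⁻¹])) = T (∑ x ∈ s, f x) := by
  classical
  induction s using Finset.induction_on with
  | empty => simp [T_zero]
  | insert _ _ hx ih =>
      rw [Finset.prod_insert hx, Finset.sum_insert hx, T_add, ih]

end Aux

theorem wronskian_laurent_nonzero_const_of_transition
    {K : Type*} [Field K] [CharZero K] {n : ℕ} (r : Fin n → ℤ)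
    (hr : Function.Injective r) (hsum : ∑ i, r i = (n.choose 2 : ℤ))
    (A : Matrix (Fin n) (Fin n) K) (hA : IsUnit A.det) :
    ∃ c : K, c ≠ 0 ∧
      lW (fun i => ∑ j, LaurentPolynomial.C (A i j) * T (r j)) = LaurentPolynomial.C c := by
  classical
  -- the coefficient matrix (falling-factorial values)
  set cM : Matrix (Fin n) (Fin n) K :=
    Matrix.of (fun i k : Fin n => ∏ l ∈ Finset.range (i : ℕ), ((r k : K) - l)) with hcM
  -- its determinant is a Vandermonde determinant
  have hcdet : cM.det = (Matrix.vandermonde fun k : Fin n => ((r k : K))).det := by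
    rw [← Matrix.det_transpose cM]
    rw [Matrix.det_eval_matrixOfPolynomials_eq_det_vandermonde
      (fun k : Fin n => ((r k : K)))
      (fun i : Fin n => ∏ l ∈ Finset.range (i : ℕ), (Polynomial.X - Polynomial.C (l : K)))
      (fun i => by
        rw [Polynomial.natDegree_prod]
        · simp only [Polynomial.natDegree_X_sub_C, Finset.sum_const, smul_eq_mul,
            mul_one, Finset.card_range]
        · intro l _
          exact Polynomial.X_sub_C_ne_zero _)
      (fun i => Polynomial.monic_prod_of_monic _ _ fun l _ => Polynomial.monic_X_sub_C _)]
    congr 1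
    ext k i
    simp [cM, Polynomial.eval_prod]
  have hcne : cM.det ≠ 0 := by
    rw [hcdet]
    rw [Matrix.det_vandermonde_ne_zero_iff]
    exact fun a b hab => hr (Int.cast_injective hab)
  refine ⟨cM.det * A.det, mul_ne_zero hcne hA.ne_zero, ?_⟩
  unfold lW
  have hM : (Matrix.of fun i j : Fin n =>
        lderiv^[(i : ℕ)] (∑ k, LaurentPolynomial.C (A j k) * T (r k))) =
      Matrix.diagonal (fun i : Fin n => (T (-(i : ℤ)) : K[T;T⁻¹])) *
        (cM.map LaurentPolynomial.C) *
        Matrix.diagonal (fun k : Fin n => (T (r k) : K[T;T⁻¹])) *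
        (A.map LaurentPolynomial.C).transpose := by
    refine Matrix.ext fun i j => ?_
    rw [Matrix.of_apply, lderiv_iter_sum]
    have hterm : ∀ k : Fin n, lderiv^[(i : ℕ)] (LaurentPolynomial.C (A j k) * T (r k)) =
        LaurentPolynomial.C (A j k * ∏ l ∈ Finset.range (i : ℕ), ((r k : K) - l)) *
          T (r k - i) :=
      fun k => lderiv_iter_single _ _ _
    simp_rw [hterm]
    rw [Matrix.mul_apply]
    refine Finset.sum_congr rfl fun k _ => ?_
    simp only [Matrix.mul_diagonal, Matrix.diagonal_mul, Matrix.map_apply,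
      Matrix.transpose_apply, Matrix.of_apply, cM]
    rw [T_sub, map_mul]
    ring
  rw [hM, Matrix.det_mul, Matrix.det_mul, Matrix.det_mul, Matrix.det_diagonal,
    Matrix.det_diagonal, Matrix.det_transpose, T_prod, T_prod,
    ← RingHom.mapMatrix_apply, ← RingHom.map_det, ← RingHom.mapMatrix_apply,
    ← RingHom.map_det]
  have h1 : (∑ i : Fin n, -(i : ℤ)) = -(n.choose 2 : ℤ) := by
    have h2 : (∑ i : Fin n, (i : ℤ)) = (n.choose 2 : ℤ) := by
      rw [Fin.sum_univ_eq_sum_range (fun i => (i : ℤ)) n, ← Nat.cast_sum,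
        Finset.sum_range_id, Nat.choose_two_right]
    rw [Finset.sum_neg_distrib, h2]
  rw [h1, hsum, map_mul]
  calc (T (-(n.choose 2 : ℤ)) : K[T;T⁻¹]) * LaurentPolynomial.C cM.det *
        T ((n.choose 2 : ℤ)) * LaurentPolynomial.C A.det
      = (T (-(n.choose 2 : ℤ)) * T ((n.choose 2 : ℤ))) *
          (LaurentPolynomial.C cM.det * LaurentPolynomial.C A.det) := by ring
    _ = LaurentPolynomial.C cM.det * LaurentPolynomial.C A.det := by
        rw [← T_add, neg_add_cancel, T_zero, one_mul]
end
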